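/- Let X, Y, and A be Borel spaces that are separable metric spaces, let T be a stochastic kernel on X given X × A that is continuous in total variation, and let Q be a stochastic kernel on Y given A × X that is continuous in a in total variation, i.e., for every x ∈ X and a ∈ A, sup_{C ∈ B(Y)} |Q(C|a',x) − Q(C|a,x)| → 0 as a' → a. Then the stochastic kernel P on X × Y given X × A defined by P(B × C | x,a) = ∫_B Q(C|a,x') T(dx'|x,a) is semi-uniform Feller. -/

import Mathlib

open MeasureTheory ProbabilityTheory Filter Topology BoundedContinuousFunction Set

noncomputable section

/-- The marginal measure `A ↦ μ(A × B)` on the first factor. -/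
def sectionMeasure {X Y : Type*} [MeasurableSpace X] [MeasurableSpace Y]
    (μ : Measure (X × Y)) (B : Set Y) : Measure X :=
  (μ.restrict (Set.univ ×ˢ B)).map Prod.fst

/-- Semi-uniform Feller continuity of a stochastic kernel on `X × Y` given `Z`. -/
def SemiUniformFeller {X Y Z : Type*} [MeasurableSpace X] [TopologicalSpace X]
    [MeasurableSpace Y] [MeasurableSpace Z] [TopologicalSpace Z]
    (P : Kernel Z (X × Y)) : Prop :=
  ∀ z : Z, ∀ f : X →ᵇ ℝ,
    Filter.Tendsto (fun z' => ⨆ (B : Set Y) (_ : MeasurableSet B),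
      |(∫ x, f x ∂(sectionMeasure (P z') B)) - ∫ x, f x ∂(sectionMeasure (P z) B)|)
      (𝓝 z) (𝓝 0)

open scoped ENNReal NNReal

section AuxiliaryLemmas
variable {X' : Type*} [MeasurableSpace X']

lemma meas_le_add_of_abs_toReal_sub_le {μ ν : Measure X'}
    [IsFiniteMeasure μ] [IsFiniteMeasure ν] {B : Set X'} {ε : ℝ}
    (h : |(μ B).toReal - (ν B).toReal| ≤ ε) : μ B ≤ ν B + ENNReal.ofReal ε := by
  have h1 : (μ B).toReal ≤ (ν B).toReal + ε := by
    have := abs_le.mp h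
    linarith [this.2]
  calc μ B = ENNReal.ofReal ((μ B).toReal) := (ENNReal.ofReal_toReal (measure_ne_top μ B)).symm
    _ ≤ ENNReal.ofReal ((ν B).toReal + ε) := ENNReal.ofReal_le_ofReal h1
    _ ≤ ENNReal.ofReal ((ν B).toReal) + ENNReal.ofReal ε := ENNReal.ofReal_add_le
    _ = ν B + ENNReal.ofReal ε := by rw [ENNReal.ofReal_toReal (measure_ne_top ν B)]

lemma abs_integral_sub_integral_le_of_nonneg (μ ν : Measure X') [IsProbabilityMeasure μ] [IsProbabilityMeasure ν]
    {g : X' → ℝ} (hg : Measurable g) {M : ℝ} (hM : 0 ≤ M)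
    (hg0 : ∀ u, 0 ≤ g u) (hgM : ∀ u, g u ≤ M)
    {ε : ℝ} (hε0 : 0 ≤ ε)
    (hε : ∀ B : Set X', MeasurableSet B → |(μ B).toReal - (ν B).toReal| ≤ ε) :
    |∫ u, g u ∂μ - ∫ u, g u ∂ν| ≤ M * ε := by
  have key : ∀ (ρ σ : Measure X'), IsProbabilityMeasure ρ → IsProbabilityMeasure σ →
      (∀ B : Set X', MeasurableSet B → ρ B ≤ σ B + ENNReal.ofReal ε) →
      (∫⁻ u, ENNReal.ofReal (g u) ∂ρ) ≤ (∫⁻ u, ENNReal.ofReal (g u) ∂σ)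
        + ENNReal.ofReal (M * ε) := by
    intro ρ σ hρ hσ hle
    have hsplit : ∀ (τ : Measure X'), IsProbabilityMeasure τ →
        ∫⁻ u, ENNReal.ofReal (g u) ∂τ = ∫⁻ t in Ioc (0:ℝ) M, τ {a | t < g a} := by
      intro τ hτ
      rw [lintegral_eq_lintegral_meas_lt τ (ae_of_all _ hg0) hg.aemeasurable,
        ← Ioc_union_Ioi_eq_Ioi hM, lintegral_union measurableSet_Ioi (Ioc_disjoint_Ioi le_rfl)]
      have hzero : ∫⁻ t in Ioi M, τ {a | t < g a} = ∫⁻ _ in Ioi M, (0:ℝ≥0∞) := by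
        refine setLIntegral_congr_fun measurableSet_Ioi (fun t ht => ?_)
        have : {a | t < g a} = ∅ := by
          ext u
          simp only [mem_setOf_eq, mem_empty_iff_false, iff_false, not_lt]
          exact (hgM u).trans (le_of_lt ht)
        simp [this]
      rw [hzero]
      simp
    rw [hsplit ρ hρ, hsplit σ hσ]
    calc ∫⁻ t in Ioc (0:ℝ) M, ρ {a | t < g a}
        ≤ ∫⁻ t in Ioc (0:ℝ) M, (σ {a | t < g a} + ENNReal.ofReal ε) := by
          refine lintegral_mono fun t => hle _ (measurableSet_lt measurable_const hg)
      _ = (∫⁻ t in Ioc (0:ℝ) M, σ {a | t < g a}) + ENNReal.ofReal ε * volume (Ioc (0:ℝ) M) := by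
          rw [lintegral_add_right _ measurable_const, setLIntegral_const]
      _ = (∫⁻ t in Ioc (0:ℝ) M, σ {a | t < g a}) + ENNReal.ofReal (M * ε) := by
          rw [Real.volume_Ioc, sub_zero, ← ENNReal.ofReal_mul hε0, mul_comm]
  have hfin : ∀ (τ : Measure X'), IsProbabilityMeasure τ →
      ∫⁻ u, ENNReal.ofReal (g u) ∂τ ≤ ENNReal.ofReal M := by
    intro τ hτ
    calc ∫⁻ u, ENNReal.ofReal (g u) ∂τ ≤ ∫⁻ _, ENNReal.ofReal M ∂τ :=
          lintegral_mono fun u => ENNReal.ofReal_le_ofReal (hgM u)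
      _ = ENNReal.ofReal M := by simp
  have hμfin := (hfin μ inferInstance).trans_lt ENNReal.ofReal_lt_top
  have hνfin := (hfin ν inferInstance).trans_lt ENNReal.ofReal_lt_top
  have hint : ∀ (τ : Measure X'), IsProbabilityMeasure τ →
      ∫ u, g u ∂τ = (∫⁻ u, ENNReal.ofReal (g u) ∂τ).toReal := by
    intro τ hτ
    exact integral_eq_lintegral_of_nonneg_ae (ae_of_all _ hg0) hg.aestronglyMeasurable
  rw [hint μ inferInstance, hint ν inferInstance]
  have hε' : ∀ B : Set X', MeasurableSet B → |(ν B).toReal - (μ B).toReal| ≤ ε := by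
    intro B hB; rw [abs_sub_comm]; exact hε B hB
  have h1 := key μ ν inferInstance inferInstance
    (fun B hB => meas_le_add_of_abs_toReal_sub_le (hε B hB))
  have h2 := key ν μ inferInstance inferInstance
    (fun B hB => meas_le_add_of_abs_toReal_sub_le (hε' B hB))
  have hMε : (0:ℝ) ≤ M * ε := mul_nonneg hM hε0
  rw [abs_sub_le_iff]
  constructor
  · have := ENNReal.toReal_mono (by finiteness) h1
    rw [ENNReal.toReal_add hνfin.ne (by finiteness), ENNReal.toReal_ofReal hMε] at this
    linarith
  · have := ENNReal.toReal_mono (by finiteness) h2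
    rw [ENNReal.toReal_add hμfin.ne (by finiteness), ENNReal.toReal_ofReal hMε] at this
    linarith


lemma abs_integral_sub_integral_le
    (μ ν : Measure X') [IsProbabilityMeasure μ] [IsProbabilityMeasure ν]
    {g : X' → ℝ} (hg : Measurable g) {M : ℝ} (hM : 0 ≤ M)
    (hgM : ∀ u, |g u| ≤ M)
    {ε : ℝ} (hε0 : 0 ≤ ε)
    (hε : ∀ B : Set X', MeasurableSet B → |(μ B).toReal - (ν B).toReal| ≤ ε) :
    |∫ u, g u ∂μ - ∫ u, g u ∂ν| ≤ 2 * M * ε := by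
  have hint : ∀ (τ : Measure X'), IsProbabilityMeasure τ → Integrable g τ := by
    intro τ hτ
    exact Integrable.mono' (integrable_const M) hg.aestronglyMeasurable
      (ae_of_all _ fun u => by rw [Real.norm_eq_abs]; exact hgM u)
  have h1 : ∀ (τ : Measure X'), IsProbabilityMeasure τ →
      ∫ u, (g u + M) ∂τ = (∫ u, g u ∂τ) + M := by
    intro τ hτ
    rw [integral_add (hint τ hτ) (integrable_const M), integral_const, probReal_univ]
    simp
  have h2 := abs_integral_sub_integral_le_of_nonneg μ ν (hg.add_const M)
    (by linarith : (0:ℝ) ≤ 2 * M) (fun u => by have := (abs_le.mp (hgM u)).1; linarith)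
    (fun u => by have := (abs_le.mp (hgM u)).2; linarith) hε0 hε
  rw [h1 μ inferInstance, h1 ν inferInstance] at h2
  simpa using h2

lemma abs_toReal_sub_le_two (p q : Measure X')
    [IsProbabilityMeasure p] [IsProbabilityMeasure q] (C : Set X') :
    |(p C).toReal - (q C).toReal| ≤ 2 := by
  have h1 : (p C).toReal ≤ 1 := by
    have := ENNReal.toReal_mono ENNReal.one_ne_top (prob_le_one (μ := p) (s := C))
    simpa using this
  have h2 : (q C).toReal ≤ 1 := by
    have := ENNReal.toReal_mono ENNReal.one_ne_top (prob_le_one (μ := q) (s := C))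
    simpa using this
  have h3 : 0 ≤ (p C).toReal := ENNReal.toReal_nonneg
  have h4 : 0 ≤ (q C).toReal := ENNReal.toReal_nonneg
  rw [abs_sub_le_iff]
  constructor <;> linarith

lemma le_double_iSup {g : Set X' → ℝ}
    (hg0 : ∀ C, 0 ≤ g C) (hg2 : ∀ C, g C ≤ 2) {C : Set X'} (hC : MeasurableSet C) :
    g C ≤ ⨆ (C' : Set X') (_ : MeasurableSet C'), g C' := by
  have hb : BddAbove (Set.range fun C' : Set X' => ⨆ _ : MeasurableSet C', g C') := by
    refine ⟨2, ?_⟩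
    rintro y ⟨C', rfl⟩
    exact Real.iSup_le (fun _ => hg2 C') (by norm_num)
  calc g C = ⨆ _ : MeasurableSet C, g C := (ciSup_pos (f := fun _ : MeasurableSet C => g C) hC).symm
    _ ≤ ⨆ (C' : Set X') (_ : MeasurableSet C'), g C' := le_ciSup hb C

end AuxiliaryLemmas

lemma exists_countable_approx (Y : Type*) [MeasurableSpace Y] [MetricSpace Y] [BorelSpace Y]
    [TopologicalSpace.SeparableSpace Y] :
    ∃ 𝒮 : Set (Set Y), 𝒮.Countable ∧ 𝒮.Nonempty ∧ (∀ s ∈ 𝒮, MeasurableSet s) ∧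
      ∀ (μ ν : Measure Y), IsProbabilityMeasure μ → IsProbabilityMeasure ν →
        ∀ B : Set Y, MeasurableSet B → ∀ ε : ℝ, 0 < ε →
          ∃ s ∈ 𝒮, |(μ B).toReal - (ν B).toReal| ≤ |(μ s).toReal - (ν s).toReal| + ε := by
  classical
  haveI : SecondCountableTopology Y := UniformSpace.secondCountable_of_separable Y
  obtain ⟨b, hbc, -, hb⟩ := TopologicalSpace.exists_countable_basis Y
  refine ⟨insert ∅ ((fun F : Finset (Set Y) => ⋃₀ ↑F) '' {F : Finset (Set Y) | ↑F ⊆ b}),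
    ?_, ⟨∅, mem_insert _ _⟩, ?_, ?_⟩
  · refine Set.Countable.insert ∅ (Set.Countable.image ?_ _)
    have h1 : ((fun F : Finset (Set Y) => (↑F : Set (Set Y))) ⁻¹' {s : Set (Set Y) | s.Finite ∧ s ⊆ b}).Countable :=
      (Set.countable_setOf_finite_subset hbc).preimage Finset.coe_injective
    have hsub : {F : Finset (Set Y) | ↑F ⊆ b} ⊆
        ((fun F : Finset (Set Y) => (↑F : Set (Set Y))) ⁻¹' {s : Set (Set Y) | s.Finite ∧ s ⊆ b}) :=
      fun F hF => ⟨F.finite_toSet, hF⟩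
    exact Set.Countable.mono hsub h1
  · rintro s (rfl | ⟨F, hF, rfl⟩)
    · exact MeasurableSet.empty
    · exact (isOpen_sUnion fun t ht => hb.isOpen (hF ht)).measurableSet
  · intro μ ν hμ hν B hB ε hε
    set ξ : Measure Y := μ + ν with hξ
    have hq : (0:ℝ) < ε/4 := by linarith
    obtain ⟨U, hBU, hUopen, hξU⟩ := B.exists_isOpen_lt_add (μ := ξ) (measure_ne_top ξ B)
      (ne_of_gt (ENNReal.ofReal_pos.mpr hq))
    have hUB : ξ U ≤ ξ B + ENNReal.ofReal (ε/4) := le_of_lt hξU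
    have key : ∀ (τ : Measure Y), IsFiniteMeasure τ → (∀ s : Set Y, τ s ≤ ξ s) →
        (τ B).toReal ≤ (τ U).toReal ∧ (τ U).toReal ≤ (τ B).toReal + ε/4 := by
      intro τ hτ hle
      constructor
      · exact ENNReal.toReal_mono (measure_ne_top τ U) (measure_mono hBU)
      · have h1 : τ U ≤ τ B + ENNReal.ofReal (ε/4) := by
          calc τ U ≤ τ B + τ (U \ B) := by
                conv_lhs => rw [← Set.union_diff_cancel hBU]
                exact measure_union_le _ _
            _ ≤ τ B + ξ (U \ B) := add_le_add le_rfl (hle _)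
            _ ≤ τ B + ENNReal.ofReal (ε/4) := by
                refine add_le_add le_rfl ?_
                have hd : ξ (U \ B) = ξ U - ξ B :=
                  measure_diff hBU hB.nullMeasurableSet (measure_ne_top ξ B)
                rw [hd]
                exact tsub_le_iff_left.mpr hUB
        have h2 := ENNReal.toReal_mono (by finiteness) h1
        rwa [ENNReal.toReal_add (measure_ne_top τ B) (by finiteness),
          ENNReal.toReal_ofReal (le_of_lt hq)] at h2
    have hμle : ∀ s : Set Y, μ s ≤ ξ s := fun s => by
      rw [hξ, Measure.add_apply]; exact self_le_add_right _ _
    have hνle : ∀ s : Set Y, ν s ≤ ξ s := fun s => by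
      rw [hξ, Measure.add_apply]; exact self_le_add_left _ _
    obtain ⟨haB, haU⟩ := key μ inferInstance hμle
    obtain ⟨hbB, hbU⟩ := key ν inferInstance hνle
    obtain ⟨S, hSb, hUS⟩ := hb.open_eq_sUnion hUopen
    rcases S.eq_empty_or_nonempty with rfl | hSne
    · have hU : U = ∅ := by simpa using hUS
      have hBe : B = ∅ := eq_empty_of_subset_empty (hU ▸ hBU)
      refine ⟨∅, mem_insert _ _, ?_⟩
      simp only [hBe, measure_empty, ENNReal.toReal_zero, sub_zero, abs_zero]
      linarith
    · obtain ⟨g, rfl⟩ := (hbc.mono hSb).exists_eq_range hSne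
      have hUg : U = ⋃ n, g n := by rw [hUS, sUnion_range]
      have htμ : Tendsto (fun n => (μ (accumulate g n)).toReal) atTop (𝓝 ((μ U).toReal)) := by
        rw [hUg]
        exact (ENNReal.tendsto_toReal (measure_ne_top μ _)).comp tendsto_measure_iUnion_accumulate
      have htν : Tendsto (fun n => (ν (accumulate g n)).toReal) atTop (𝓝 ((ν U).toReal)) := by
        rw [hUg]
        exact (ENNReal.tendsto_toReal (measure_ne_top ν _)).comp tendsto_measure_iUnion_accumulate
      have h1 : ∀ᶠ n in atTop, (μ (accumulate g n)).toReal ∈ Metric.ball ((μ U).toReal) (ε/4) :=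
        htμ (Metric.ball_mem_nhds _ hq)
      have h2 : ∀ᶠ n in atTop, (ν (accumulate g n)).toReal ∈ Metric.ball ((ν U).toReal) (ε/4) :=
        htν (Metric.ball_mem_nhds _ hq)
      obtain ⟨n, hn1, hn2⟩ := (h1.and h2).exists
      have han2 : |(μ (accumulate g n)).toReal - (μ U).toReal| < ε/4 := by
        have := Metric.mem_ball.mp hn1; rwa [Real.dist_eq] at this
      have hbn2 : |(ν (accumulate g n)).toReal - (ν U).toReal| < ε/4 := by
        have := Metric.mem_ball.mp hn2; rwa [Real.dist_eq] at this
      have hmem : accumulate g n ∈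
          insert ∅ ((fun F : Finset (Set Y) => ⋃₀ ↑F) '' {F : Finset (Set Y) | ↑F ⊆ b}) := by
        refine mem_insert_of_mem _ ⟨(Finset.range (n+1)).image g, ?_, ?_⟩
        · intro t ht
          simp only [Finset.mem_coe, Finset.mem_image, Finset.mem_range] at ht
          obtain ⟨i, -, rfl⟩ := ht
          exact hSb (mem_range_self i)
        · ext y
          simp only [Set.mem_sUnion, Finset.mem_coe, Finset.mem_image, Finset.mem_range,
            Set.mem_accumulate, Nat.lt_succ_iff]
          constructor
          · rintro ⟨t, ⟨i, hi, rfl⟩, hyt⟩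
            exact ⟨i, hi, hyt⟩
          · rintro ⟨i, hi, hy⟩
            exact ⟨g i, ⟨i, hi, rfl⟩, hy⟩
      refine ⟨accumulate g n, hmem, ?_⟩
      set aB := (μ B).toReal; set bB := (ν B).toReal
      set aU := (μ U).toReal; set bU := (ν U).toReal
      set an := (μ (accumulate g n)).toReal; set bn := (ν (accumulate g n)).toReal
      have h3 := abs_lt.mp han2
      have h4 := abs_lt.mp hbn2
      have h5 := le_abs_self (an - bn)
      have h6 := neg_abs_le (an - bn)
      rw [abs_sub_le_iff]
      constructor <;> linarith


/-- If the transition kernel `T` is continuous in total variation and the observation kernel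
`Q` is continuous in `a` in total variation, then the joint kernel
`P(B × C|x,a) = ∫_B Q(C|a,x') T(dx'|x,a)` is semi-uniform Feller. -/
theorem semiUniformFeller_of_tv_and_tv_in_a
    {X Y A : Type*}
    [MeasurableSpace X] [MetricSpace X] [BorelSpace X]
    [TopologicalSpace.SeparableSpace X] [StandardBorelSpace X]
    [MeasurableSpace Y] [MetricSpace Y] [BorelSpace Y]
    [TopologicalSpace.SeparableSpace Y] [StandardBorelSpace Y]
    [MeasurableSpace A] [MetricSpace A] [BorelSpace A]
    [TopologicalSpace.SeparableSpace A] [StandardBorelSpace A]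
    (T : Kernel (X × A) X) [IsMarkovKernel T]
    (Q : Kernel (A × X) Y) [IsMarkovKernel Q]
    (hT : ∀ p : X × A, Filter.Tendsto
      (fun p' => ⨆ (B : Set X) (_ : MeasurableSet B), |(T p' B).toReal - (T p B).toReal|)
      (𝓝 p) (𝓝 0))
    (hQ : ∀ (x : X) (a : A), Filter.Tendsto
      (fun a' => ⨆ (C : Set Y) (_ : MeasurableSet C),
        |(Q (a', x) C).toReal - (Q (a, x) C).toReal|)
      (𝓝 a) (𝓝 0))
    (P : Kernel (X × A) (X × Y)) [IsMarkovKernel P]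
    (hP : ∀ (x : X) (a : A) (B : Set X) (C : Set Y), MeasurableSet B → MeasurableSet C →
      P (x, a) (B ×ˢ C) = ∫⁻ x' in B, Q (a, x') C ∂(T (x, a))) :
    SemiUniformFeller P := by
  rintro ⟨x, a⟩ f
  obtain ⟨𝒮, h𝒮c, h𝒮ne, h𝒮m, h𝒮approx⟩ := exists_countable_approx Y
  haveI : Countable ↥𝒮 := h𝒮c.to_subtype
  haveI : Nonempty ↥𝒮 := h𝒮ne.to_subtype
  -- measurability helpers
  have hQm : ∀ (a' : A) {C : Set Y}, MeasurableSet C → Measurable fun u : X => Q (a', u) C :=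
    fun a' C hC => (Q.measurable_coe hC).comp measurable_prodMk_left
  have hQmr : ∀ (a' : A) {C : Set Y}, MeasurableSet C →
      Measurable fun u : X => (Q (a', u) C).toReal :=
    fun a' C hC => (hQm a' hC).ennreal_toReal
  -- the countable-sup TV function
  set H : A → X → ℝ≥0∞ := fun a' u =>
    ⨆ s : ↥𝒮, ENNReal.ofReal |(Q (a', u) ↑s).toReal - (Q (a, u) ↑s).toReal| with hHdef
  have hHmeas : ∀ a', Measurable (H a') := by
    intro a'
    exact Measurable.iSup fun s =>
      ((hQmr a' (h𝒮m s s.2)).sub (hQmr a (h𝒮m s s.2))).abs.ennreal_ofReal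
  have hH2 : ∀ a' u, H a' u ≤ 2 := by
    intro a' u
    refine iSup_le fun s => ?_
    calc ENNReal.ofReal |(Q (a', u) ↑s).toReal - (Q (a, u) ↑s).toReal|
        ≤ ENNReal.ofReal 2 := ENNReal.ofReal_le_ofReal (abs_toReal_sub_le_two _ _ _)
      _ = 2 := by norm_num
  have hkey : ∀ (a' : A) (u : X) (B : Set Y), MeasurableSet B →
      ENNReal.ofReal |(Q (a', u) B).toReal - (Q (a, u) B).toReal| ≤ H a' u := by
    intro a' u B hB
    refine ENNReal.le_of_forall_pos_le_add fun ε hε htop => ?_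
    obtain ⟨s, hs, hle⟩ := h𝒮approx (Q (a', u)) (Q (a, u)) inferInstance inferInstance B hB
      ε (by exact_mod_cast hε)
    calc ENNReal.ofReal |(Q (a', u) B).toReal - (Q (a, u) B).toReal|
        ≤ ENNReal.ofReal (|(Q (a', u) s).toReal - (Q (a, u) s).toReal| + (ε:ℝ)) :=
          ENNReal.ofReal_le_ofReal hle
      _ ≤ ENNReal.ofReal |(Q (a', u) s).toReal - (Q (a, u) s).toReal| + ENNReal.ofReal (ε:ℝ) :=
          ENNReal.ofReal_add_le
      _ ≤ H a' u + (ε : ℝ≥0∞) := by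
          refine add_le_add ?_ (by simp)
          exact le_iSup_of_le ⟨s, hs⟩ le_rfl
  -- the H-integral tends to zero
  have hHtend : Tendsto (fun a' => ∫⁻ u, H a' u ∂(T (x, a))) (𝓝 a) (𝓝 0) := by
    have h0 : (𝓝 (0:ℝ≥0∞)) = 𝓝 (∫⁻ _, (0:ℝ≥0∞) ∂(T (x, a))) := by simp
    rw [h0]
    refine tendsto_lintegral_filter_of_dominated_convergence (fun _ => (2:ℝ≥0∞))
      (Eventually.of_forall hHmeas) (Eventually.of_forall fun a' => ae_of_all _ (hH2 a'))
      (by simp) (ae_of_all _ fun u => ?_)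
    have hub : ∀ a', H a' u ≤ ENNReal.ofReal (⨆ (C : Set Y) (_ : MeasurableSet C),
        |(Q (a', u) C).toReal - (Q (a, u) C).toReal|) := by
      intro a'
      refine iSup_le fun s => ENNReal.ofReal_le_ofReal ?_
      exact le_double_iSup (g := fun C => |(Q (a', u) C).toReal - (Q (a, u) C).toReal|)
        (fun C => abs_nonneg _) (fun C => abs_toReal_sub_le_two (Q (a', u)) (Q (a, u)) C)
        (h𝒮m s s.2)
    have h2 : Tendsto (fun a' => ENNReal.ofReal (⨆ (C : Set Y) (_ : MeasurableSet C),
        |(Q (a', u) C).toReal - (Q (a, u) C).toReal|)) (𝓝 a) (𝓝 0) := by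
      have h3 := (ENNReal.continuous_ofReal.tendsto 0).comp (hQ u a)
      simpa [Function.comp_def] using h3
    exact tendsto_of_tendsto_of_tendsto_of_le_of_le tendsto_const_nhds h2
      (fun a' => zero_le) hub
  -- identification of the section measure
  have hsec : ∀ (p : X × A) (B : Set Y), MeasurableSet B →
      sectionMeasure (P p) B = (T p).withDensity (fun u => Q (p.2, u) B) := by
    rintro ⟨x', a'⟩ B hB
    dsimp only
    ext s hs
    rw [sectionMeasure, Measure.map_apply measurable_fst hs,
      Measure.restrict_apply (measurable_fst hs)]
    have hset : Prod.fst ⁻¹' s ∩ (Set.univ ×ˢ B) = s ×ˢ B := by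
      ext ⟨u, v⟩
      simp [Set.mem_prod]
    rw [hset, hP x' a' s B hs hB, withDensity_apply _ hs]
  -- integral representation
  have hint : ∀ (p : X × A) (B : Set Y), MeasurableSet B →
      (∫ u, f u ∂(sectionMeasure (P p) B)) = ∫ u, (Q (p.2, u) B).toReal * f u ∂(T p) := by
    intro p B hB
    rw [hsec p B hB]
    have hfun : (fun u => Q (p.2, u) B) = fun u => ((Q (p.2, u) B).toNNReal : ℝ≥0∞) := by
      funext u
      exact (ENNReal.coe_toNNReal (measure_ne_top _ _)).symm
    rw [hfun, integral_withDensity_eq_integral_smul ((hQm p.2 hB).ennreal_toNNReal) f]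
    congr 1
  -- the TV sup for T
  set εT : X × A → ℝ := fun p => ⨆ (B : Set X) (_ : MeasurableSet B),
    |(T p B).toReal - (T (x, a) B).toReal| with hεTdef
  have hεT0 : ∀ p, 0 ≤ εT p :=
    fun p => Real.iSup_nonneg fun B => Real.iSup_nonneg fun _ => abs_nonneg _
  have hεTb : ∀ p (B : Set X), MeasurableSet B →
      |(T p B).toReal - (T (x, a) B).toReal| ≤ εT p :=
    fun p B hB => le_double_iSup (g := fun B' => |(T p B').toReal - (T (x, a) B').toReal|)
      (fun C => abs_nonneg _) (fun C => abs_toReal_sub_le_two (T p) (T (x, a)) C) hB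
  set G : X × A → ℝ :=
    fun p => 2 * ‖f‖ * εT p + ‖f‖ * (∫⁻ u, H p.2 u ∂(T (x, a))).toReal with hGdef
  have hG0 : ∀ p, 0 ≤ G p := fun p => add_nonneg (mul_nonneg (by positivity) (hεT0 p))
    (mul_nonneg (norm_nonneg f) ENNReal.toReal_nonneg)
  -- main estimate
  have claim : ∀ (p : X × A) (B : Set Y), MeasurableSet B →
      |(∫ u, f u ∂(sectionMeasure (P p) B)) - ∫ u, f u ∂(sectionMeasure (P (x, a)) B)| ≤
        G p := by
    rintro ⟨x', a'⟩ B hB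
    rw [hint (x', a') B hB, hint (x, a) B hB]
    dsimp only
    set q' : X → ℝ := fun u => (Q (a', u) B).toReal with hq'def
    set q : X → ℝ := fun u => (Q (a, u) B).toReal with hqdef
    have hq'm : Measurable q' := hQmr a' hB
    have hqm : Measurable q := hQmr a hB
    have h01 : ∀ (c : A) (u : X), 0 ≤ (Q (c, u) B).toReal ∧ (Q (c, u) B).toReal ≤ 1 := by
      intro c u
      refine ⟨ENNReal.toReal_nonneg, ?_⟩
      have := ENNReal.toReal_mono ENNReal.one_ne_top (prob_le_one (μ := Q (c, u)) (s := B))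
      simpa using this
    have hbound1 : ∀ u, |q' u * f u| ≤ ‖f‖ := by
      intro u
      rw [abs_mul]
      calc |q' u| * |f u| ≤ 1 * ‖f‖ := by
            refine mul_le_mul ?_ ?_ (abs_nonneg _) zero_le_one
            · rw [hq'def, abs_of_nonneg (h01 a' u).1]; exact (h01 a' u).2
            · rw [← Real.norm_eq_abs]; exact f.norm_coe_le_norm u
        _ = ‖f‖ := one_mul _
    have hbound2 : ∀ u, |q u * f u| ≤ ‖f‖ := by
      intro u
      rw [abs_mul]
      calc |q u| * |f u| ≤ 1 * ‖f‖ := by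
            refine mul_le_mul ?_ ?_ (abs_nonneg _) zero_le_one
            · rw [hqdef, abs_of_nonneg (h01 a u).1]; exact (h01 a u).2
            · rw [← Real.norm_eq_abs]; exact f.norm_coe_le_norm u
        _ = ‖f‖ := one_mul _
    have hterm1 : |(∫ u, q' u * f u ∂(T (x', a'))) - ∫ u, q' u * f u ∂(T (x, a))| ≤
        2 * ‖f‖ * εT (x', a') :=
      abs_integral_sub_integral_le _ _ (hq'm.mul f.continuous.measurable) (norm_nonneg f)
        hbound1 (hεT0 _) (fun B' hB' => hεTb _ B' hB')
    have hi1 : Integrable (fun u => q' u * f u) (T (x, a)) :=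
      Integrable.mono' (integrable_const ‖f‖)
        (hq'm.mul f.continuous.measurable).aestronglyMeasurable
        (ae_of_all _ fun u => by rw [Real.norm_eq_abs]; exact hbound1 u)
    have hi2 : Integrable (fun u => q u * f u) (T (x, a)) :=
      Integrable.mono' (integrable_const ‖f‖)
        (hqm.mul f.continuous.measurable).aestronglyMeasurable
        (ae_of_all _ fun u => by rw [Real.norm_eq_abs]; exact hbound2 u)
    have hterm2 : |(∫ u, q' u * f u ∂(T (x, a))) - ∫ u, q u * f u ∂(T (x, a))| ≤
        ‖f‖ * (∫⁻ u, H a' u ∂(T (x, a))).toReal := by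
      rw [← integral_sub hi1 hi2]
      have hfeq : (fun u => q' u * f u - q u * f u) = fun u => (q' u - q u) * f u := by
        funext u; ring
      rw [show (∫ u, (q' u * f u - q u * f u) ∂(T (x, a))) =
          ∫ u, (q' u - q u) * f u ∂(T (x, a)) from by rw [hfeq]]
      have hmeasg : Measurable fun u => |(q' u - q u) * f u| :=
        ((hq'm.sub hqm).mul f.continuous.measurable).abs
      have habs : |∫ u, (q' u - q u) * f u ∂(T (x, a))| ≤
          ∫ u, |(q' u - q u) * f u| ∂(T (x, a)) := by
        have h5 := norm_integral_le_integral_norm (μ := T (x, a))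
          (fun u => (q' u - q u) * f u)
        simpa only [Real.norm_eq_abs] using h5
      have heq2 : ∫ u, |(q' u - q u) * f u| ∂(T (x, a)) =
          (∫⁻ u, ENNReal.ofReal |(q' u - q u) * f u| ∂(T (x, a))).toReal :=
        integral_eq_lintegral_of_nonneg_ae (ae_of_all _ fun u => abs_nonneg _)
          hmeasg.aestronglyMeasurable
      have hle : (∫⁻ u, ENNReal.ofReal |(q' u - q u) * f u| ∂(T (x, a))) ≤
          ENNReal.ofReal ‖f‖ * ∫⁻ u, H a' u ∂(T (x, a)) := by
        rw [← lintegral_const_mul _ (hHmeas a')]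
        refine lintegral_mono fun u => ?_
        calc ENNReal.ofReal |(q' u - q u) * f u|
            ≤ ENNReal.ofReal (‖f‖ * |q' u - q u|) := by
              refine ENNReal.ofReal_le_ofReal ?_
              rw [abs_mul, mul_comm]
              refine mul_le_mul ?_ le_rfl (abs_nonneg _) (norm_nonneg f)
              rw [← Real.norm_eq_abs]; exact f.norm_coe_le_norm u
          _ = ENNReal.ofReal ‖f‖ * ENNReal.ofReal |q' u - q u| :=
              ENNReal.ofReal_mul (norm_nonneg f)
          _ ≤ ENNReal.ofReal ‖f‖ * H a' u := mul_le_mul_right (hkey a' u B hB) _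
      have hfin : ENNReal.ofReal ‖f‖ * ∫⁻ u, H a' u ∂(T (x, a)) ≠ ⊤ := by
        refine ENNReal.mul_ne_top ENNReal.ofReal_ne_top ?_
        have h6 : ∫⁻ u, H a' u ∂(T (x, a)) ≤ 2 := by
          calc ∫⁻ u, H a' u ∂(T (x, a)) ≤ ∫⁻ _, 2 ∂(T (x, a)) := lintegral_mono (hH2 a')
            _ = 2 := by simp
        exact (h6.trans_lt (by norm_num)).ne
      calc |∫ u, (q' u - q u) * f u ∂(T (x, a))|
          ≤ ∫ u, |(q' u - q u) * f u| ∂(T (x, a)) := habs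
        _ = (∫⁻ u, ENNReal.ofReal |(q' u - q u) * f u| ∂(T (x, a))).toReal := heq2
        _ ≤ (ENNReal.ofReal ‖f‖ * ∫⁻ u, H a' u ∂(T (x, a))).toReal :=
            ENNReal.toReal_mono hfin hle
        _ = ‖f‖ * (∫⁻ u, H a' u ∂(T (x, a))).toReal := by
            rw [ENNReal.toReal_mul, ENNReal.toReal_ofReal (norm_nonneg f)]
    calc |(∫ u, q' u * f u ∂(T (x', a'))) - ∫ u, q u * f u ∂(T (x, a))|
        = |((∫ u, q' u * f u ∂(T (x', a'))) - ∫ u, q' u * f u ∂(T (x, a))) +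
            ((∫ u, q' u * f u ∂(T (x, a))) - ∫ u, q u * f u ∂(T (x, a)))| := by ring_nf
      _ ≤ |(∫ u, q' u * f u ∂(T (x', a'))) - ∫ u, q' u * f u ∂(T (x, a))| +
            |(∫ u, q' u * f u ∂(T (x, a))) - ∫ u, q u * f u ∂(T (x, a))| := abs_add_le _ _
      _ ≤ 2 * ‖f‖ * εT (x', a') + ‖f‖ * (∫⁻ u, H a' u ∂(T (x, a))).toReal :=
          add_le_add hterm1 hterm2
  -- assembling
  have hSle : ∀ p : X × A, (⨆ (B : Set Y) (_ : MeasurableSet B),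
      |(∫ u, f u ∂(sectionMeasure (P p) B)) - ∫ u, f u ∂(sectionMeasure (P (x, a)) B)|) ≤
        G p := by
    intro p
    exact Real.iSup_le (fun B => Real.iSup_le (fun hB => claim p B hB) (hG0 p)) (hG0 p)
  have hS0 : ∀ p : X × A, 0 ≤ ⨆ (B : Set Y) (_ : MeasurableSet B),
      |(∫ u, f u ∂(sectionMeasure (P p) B)) - ∫ u, f u ∂(sectionMeasure (P (x, a)) B)| :=
    fun p => Real.iSup_nonneg fun B => Real.iSup_nonneg fun _ => abs_nonneg _
  have hGtend : Tendsto G (𝓝 (x, a)) (𝓝 0) := by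
    have ht1 : Tendsto (fun p => 2 * ‖f‖ * εT p) (𝓝 (x, a)) (𝓝 0) := by
      have h7 := (hT (x, a)).const_mul (2 * ‖f‖)
      simpa using h7
    have ht2 : Tendsto (fun p : X × A => ‖f‖ * (∫⁻ u, H p.2 u ∂(T (x, a))).toReal)
        (𝓝 (x, a)) (𝓝 0) := by
      have h3 : Tendsto (fun a' => (∫⁻ u, H a' u ∂(T (x, a))).toReal) (𝓝 a) (𝓝 0) := by
        have h8 := (ENNReal.tendsto_toReal (by norm_num : (0:ℝ≥0∞) ≠ ⊤)).comp hHtend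
        simpa [Function.comp_def] using h8
      have h4 : Tendsto (fun p : X × A => p.2) (𝓝 (x, a)) (𝓝 a) := continuous_snd.tendsto _
      have h9 := (h3.comp h4).const_mul ‖f‖
      simpa [Function.comp] using h9
    have h10 := ht1.add ht2
    simpa using h10
  exact squeeze_zero hS0 hSle hGtend


end
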